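/- arXiv:2311.12232 — 3 statements merged into one kernel-verified Lean document; each statement's English description precedes it below -/
import Mathlib

section
/- Let A, B : ℝ → ℝ be continuous and 1-periodic with A(y) > 0 for all y, and let F : ℝ → ℝ be continuous and 1-periodic. Suppose u, û : ℝ → ℝ are continuously differentiable 1-periodic functions and k₀, k̂₀ are real numbers satisfying −A(y)(u'(y))² − B(y)u'(y) − F(y) + k₀ = 0 and −A(y)(û'(y))² − B(y)û'(y) − F(y) + k̂₀ = 0 for all y. Then k₀ = k̂₀. -/
theorem stmt7 (A B F : ℝ → ℝ) (hA : Continuous A) (hB : Continuous B) (hF : Continuous F)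
    (hApos : ∀ y, 0 < A y)
    (hAper : ∀ y, A (y + 1) = A y) (hBper : ∀ y, B (y + 1) = B y)
    (hFper : ∀ y, F (y + 1) = F y)
    (u uhat : ℝ → ℝ) (hu : ContDiff ℝ 1 u) (huhat : ContDiff ℝ 1 uhat)
    (huper : ∀ y, u (y + 1) = u y) (huhatper : ∀ y, uhat (y + 1) = uhat y)
    (k₀ khat₀ : ℝ)
    (heq : ∀ y, -A y * (deriv u y) ^ 2 - B y * deriv u y - F y + k₀ = 0)
    (heqhat : ∀ y, -A y * (deriv uhat y) ^ 2 - B y * deriv uhat y - F y + khat₀ = 0) :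
    k₀ = khat₀ := by
  set w : ℝ → ℝ := fun y => u y - uhat y with hw
  have hdu : Differentiable ℝ u := hu.differentiable one_ne_zero
  have hduh : Differentiable ℝ uhat := huhat.differentiable one_ne_zero
  have hwc : Continuous w := (hdu.continuous).sub hduh.continuous
  have hwper : Function.Periodic w 1 := fun y => by simp [hw, huper y, huhatper y]
  obtain ⟨c, _, hc⟩ := isCompact_Icc.exists_isMaxOn (Set.nonempty_Icc.2 zero_le_one)
    hwc.continuousOn
  have hmax : ∀ y, w y ≤ w c := by
    intro y
    obtain ⟨z, hz, hzy⟩ := hwper.exists_mem_Ico₀ one_pos y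
    rw [hzy]
    exact hc (Set.Ico_subset_Icc_self hz)
  have hloc : IsLocalMax w c := Filter.Eventually.of_forall hmax
  have hder : deriv w c = 0 := hloc.deriv_eq_zero
  have hderw : deriv w c = deriv u c - deriv uhat c := deriv_sub (hdu c) (hduh c)
  have hde : deriv u c = deriv uhat c := by linarith [hderw ▸ hder]
  have h1 := heq c
  have h2 := heqhat c
  rw [hde] at h1
  linarith
end

section
/- Let n ≥ 1 and let u : ℝⁿ → ℝ satisfy the Hölder estimate |u(y') − u(y'')| ≤ L·√(‖y' − y''‖) for all y', y''. Fix y ∈ ℝⁿ. Then for every integer n₀ ≥ 1 there exist a point y* with ‖y* − y‖ ≤ 1/(2n₀) and a constant b ∈ ℝ such that the C² function φ(y') := b − 4·L·n₀^{3/2}·‖y' − y‖² satisfies φ(y*) = u(y*) and φ(y') ≤ u(y') for all y' with ‖y' − y‖ ≤ 1/n₀. In particular, u − φ has a local minimum at y* and ‖y* − y‖ → 0 as n₀ → ∞. -/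
theorem stmt8 (n : ℕ) (hn : 1 ≤ n) (L : ℝ)
    (u : EuclideanSpace ℝ (Fin n) → ℝ)
    (hu : ∀ y' y'' : EuclideanSpace ℝ (Fin n), |u y' - u y''| ≤ L * Real.sqrt ‖y' - y''‖)
    (y : EuclideanSpace ℝ (Fin n)) :
    ∀ n₀ : ℕ, 1 ≤ n₀ →
      ∃ (ystar : EuclideanSpace ℝ (Fin n)) (b : ℝ),
        ‖ystar - y‖ ≤ 1 / (2 * n₀) ∧
        b - 4 * L * (n₀ : ℝ) ^ ((3:ℝ)/2) * ‖ystar - y‖ ^ 2 = u ystar ∧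
        (∀ y' : EuclideanSpace ℝ (Fin n), ‖y' - y‖ ≤ 1 / n₀ →
          b - 4 * L * (n₀ : ℝ) ^ ((3:ℝ)/2) * ‖y' - y‖ ^ 2 ≤ u y') ∧
        IsLocalMin (fun y' => u y' - (b - 4 * L * (n₀ : ℝ) ^ ((3:ℝ)/2) * ‖y' - y‖ ^ 2)) ystar := by
  -- L is nonnegative
  have hL : 0 ≤ L := by
    have he : ‖(EuclideanSpace.single (⟨0, hn⟩ : Fin n) (1:ℝ))‖ = 1 := by
      rw [EuclideanSpace.norm_single]; norm_num
    have := hu y (y + EuclideanSpace.single (⟨0, hn⟩ : Fin n) (1:ℝ))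
    have h2 : ‖y - (y + EuclideanSpace.single (⟨0, hn⟩ : Fin n) (1:ℝ))‖ = 1 := by
      rw [sub_add_eq_sub_sub, sub_self, zero_sub, norm_neg, he]
    rw [h2, Real.sqrt_one, mul_one] at this
    exact le_trans (abs_nonneg _) this
  -- u is continuous
  have hcont : Continuous u := by
    rw [continuous_iff_continuousAt]
    intro x
    rw [ContinuousAt, tendsto_iff_dist_tendsto_zero]
    have hc : Continuous (fun y' : EuclideanSpace ℝ (Fin n) => L * Real.sqrt ‖y' - x‖) :=
      continuous_const.mul (Real.continuous_sqrt.comp (continuous_id.sub continuous_const).norm)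
    have h1 : Filter.Tendsto (fun y' : EuclideanSpace ℝ (Fin n) => L * Real.sqrt ‖y' - x‖)
        (nhds x) (nhds 0) := by
      have := hc.tendsto x
      simpa using this
    exact squeeze_zero (fun _ => dist_nonneg)
      (fun y' => by rw [Real.dist_eq]; exact hu y' x) h1
  intro n₀ hn₀
  have hn₀R : (1:ℝ) ≤ (n₀ : ℝ) := by exact_mod_cast hn₀
  have hn₀pos : (0:ℝ) < (n₀ : ℝ) := by linarith
  set C : ℝ := 4 * L * (n₀ : ℝ) ^ ((3:ℝ)/2) with hC
  have hCnn : 0 ≤ C := by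
    apply mul_nonneg (by linarith) (Real.rpow_nonneg (le_of_lt hn₀pos) _)
  set r : ℝ := 1 / (2 * n₀) with hr
  have hrpos : 0 < r := by positivity
  -- sqrt facts
  set s : ℝ := Real.sqrt (n₀ : ℝ) with hs
  have hs2 : s ^ 2 = (n₀ : ℝ) := Real.sq_sqrt (le_of_lt hn₀pos)
  have hspos : 0 < s := Real.sqrt_pos.mpr hn₀pos
  have hrpow : (n₀ : ℝ) ^ ((3:ℝ)/2) = (n₀ : ℝ) * s := by
    rw [show (3:ℝ)/2 = 1 + 1/2 by norm_num, Real.rpow_add hn₀pos, Real.rpow_one, hs,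
      Real.sqrt_eq_rpow]
  -- key: C * r^2 = L / s  and  L * sqrt(1/n₀) = L / s
  have hkey : C * r ^ 2 = L / s := by
    rw [hC, hr, hrpow]
    field_simp
    linear_combination (4 * L) * hs2
  have hsq : Real.sqrt (1 / (n₀:ℝ)) = 1 / s := by
    rw [one_div, one_div, Real.sqrt_inv, hs]
  -- minimize g on closed ball of radius r
  set g : EuclideanSpace ℝ (Fin n) → ℝ := fun y' => u y' + C * ‖y' - y‖ ^ 2 with hg
  have hgcont : Continuous g := by
    exact hcont.add (continuous_const.mul ((continuous_id.sub continuous_const).norm.pow 2))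
  obtain ⟨ystar, hmem, hmin⟩ := (isCompact_closedBall y r).exists_isMinOn
    ⟨y, Metric.mem_closedBall_self (le_of_lt hrpos)⟩ hgcont.continuousOn
  have hdist : ‖ystar - y‖ ≤ r := by
    rw [← dist_eq_norm]; exact Metric.mem_closedBall.mp hmem
  have hball : ∀ y' : EuclideanSpace ℝ (Fin n), ‖y' - y‖ ≤ 1 / (n₀:ℝ) → g ystar ≤ g y' := by
    intro y' hy'
    by_cases hcase : ‖y' - y‖ ≤ r
    · exact hmin (Metric.mem_closedBall.mpr (by rw [dist_eq_norm]; exact hcase))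
    · push_neg at hcase
      have h1 : g ystar ≤ g y := hmin (Metric.mem_closedBall_self (le_of_lt hrpos))
      have h2 : g y = u y := by simp [hg]
      have h3 : u y - u y' ≤ L * Real.sqrt ‖y - y'‖ := le_trans (le_abs_self _) (hu y y')
      have h4 : ‖y - y'‖ = ‖y' - y‖ := norm_sub_rev _ _
      have h5 : L * Real.sqrt ‖y' - y‖ ≤ L * Real.sqrt (1 / (n₀:ℝ)) :=
        mul_le_mul_of_nonneg_left (Real.sqrt_le_sqrt hy') hL
      have h6 : C * r ^ 2 ≤ C * ‖y' - y‖ ^ 2 :=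
        mul_le_mul_of_nonneg_left (by nlinarith [norm_nonneg (y' - y)]) hCnn
      have h7 : L * Real.sqrt (1 / (n₀:ℝ)) = C * r ^ 2 := by
        rw [hsq, hkey]; ring
      rw [h4] at h3
      calc g ystar ≤ u y := by rw [← h2]; exact h1
        _ ≤ u y' + L * Real.sqrt ‖y' - y‖ := by linarith
        _ ≤ u y' + C * ‖y' - y‖ ^ 2 := by
            have := le_trans h5 (le_of_eq h7)
            linarith
        _ = g y' := rfl
  refine ⟨ystar, u ystar + C * ‖ystar - y‖ ^ 2, hdist, by ring, ?_, ?_⟩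
  · intro y' hy'
    have goal2 := hball y' hy'
    simp only [hg] at goal2
    linarith
  · have hopen : ystar ∈ Metric.ball y (1 / (n₀:ℝ)) := by
      rw [Metric.mem_ball, dist_eq_norm]
      calc ‖ystar - y‖ ≤ r := hdist
        _ < 1 / (n₀:ℝ) := by
            rw [hr, div_lt_div_iff₀ (by positivity) hn₀pos]; linarith
    unfold IsLocalMin IsMinFilter
    filter_upwards [Metric.isOpen_ball.mem_nhds hopen] with y' hy'
    have hy'' : ‖y' - y‖ ≤ 1 / (n₀:ℝ) := by
      rw [← dist_eq_norm]; exact le_of_lt (Metric.mem_ball.mp hy')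
    have goal2 := hball y' hy''
    simp only [hg] at goal2
    linarith
end

section
/- Let Y ⊆ ℝⁿ be an open set, A : Y → M_n(ℝ) continuous taking positive semidefinite values, K : Y → ℝ continuous, and k₀ ∈ ℝ. Suppose u : Y → ℝ is continuous and is a viscosity supersolution of −∇u·(A∇u) − K(y) + k₀ = 0 on Y, in the sense that whenever φ is C² near a point y* ∈ Y and u − φ has a local minimum at y*, then −∇φ(y*)·(A(y*)∇φ(y*)) − K(y*) + k₀ ≥ 0. If additionally u satisfies a global ½-Hölder bound |u(y')−u(y'')| ≤ L√(‖y'−y''‖), then k₀ ≥ K(y) for every y ∈ Y. -/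
theorem stmt9 (n : ℕ) (Y : Set (EuclideanSpace ℝ (Fin n))) (hY : IsOpen Y)
    (A : EuclideanSpace ℝ (Fin n) → Matrix (Fin n) (Fin n) ℝ)
    (hA : ContinuousOn A Y) (hApsd : ∀ y ∈ Y, (A y).PosSemidef)
    (K : EuclideanSpace ℝ (Fin n) → ℝ) (hK : ContinuousOn K Y)
    (k₀ : ℝ) (u : EuclideanSpace ℝ (Fin n) → ℝ) (hu : ContinuousOn u Y)
    (L : ℝ)
    (hHol : ∀ y' ∈ Y, ∀ y'' ∈ Y, |u y' - u y''| ≤ L * Real.sqrt ‖y' - y''‖)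
    (hvisc : ∀ ystar ∈ Y, ∀ φ : EuclideanSpace ℝ (Fin n) → ℝ,
      ContDiffAt ℝ 2 φ ystar → IsLocalMin (fun y => u y - φ y) ystar →
      -(∑ i, ∑ j, A ystar i j * gradient φ ystar i * gradient φ ystar j)
        - K ystar + k₀ ≥ 0) :
    ∀ y ∈ Y, k₀ ≥ K y := by
  intro y hy
  rw [ge_iff_le]
  refine le_of_forall_pos_le_add ?_
  intro ε hε
  have hKy : ContinuousAt K y := hK.continuousAt (hY.mem_nhds hy)
  obtain ⟨δ, hδ, hδK⟩ := Metric.continuousAt_iff.mp hKy ε hε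
  obtain ⟨ρ, hρ, hρY⟩ := Metric.isOpen_iff.mp hY y hy
  set r : ℝ := min (δ / 2) (ρ / 2) with hrdef
  have hr0 : 0 < r := lt_min (by linarith) (by linarith)
  have hball : Metric.closedBall y r ⊆ Y := fun z hz => by
    apply hρY
    have hzr : dist z y ≤ r := Metric.mem_closedBall.mp hz
    have : r < ρ := lt_of_le_of_lt (min_le_right _ _) (by linarith)
    exact Metric.mem_ball.mpr (lt_of_le_of_lt hzr this)
  set C : ℝ := (|L| * Real.sqrt r + 1) / r ^ 2 with hCdef
  have hCr : C * r ^ 2 = |L| * Real.sqrt r + 1 := div_mul_cancel₀ _ (by positivity)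
  set φ : EuclideanSpace ℝ (Fin n) → ℝ := fun z => -(C * ‖z - y‖ ^ 2) with hφdef
  have hφ : ContDiff ℝ 2 φ := by
    have h1 : ContDiff ℝ 2 fun z : EuclideanSpace ℝ (Fin n) => ‖z - y‖ ^ 2 :=
      (contDiff_id.sub contDiff_const).norm_sq ℝ
    exact ((contDiff_const.mul h1)).neg
  set f : EuclideanSpace ℝ (Fin n) → ℝ := fun z => u z + C * ‖z - y‖ ^ 2 with hfdef
  have hfc : ContinuousOn f (Metric.closedBall y r) := by
    apply ContinuousOn.add (hu.mono hball)
    exact (continuous_const.mul ((continuous_id.sub continuous_const).norm.pow 2)).continuousOn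
  obtain ⟨ystar, hymem, hmin⟩ := (isCompact_closedBall y r).exists_isMinOn
    ⟨y, Metric.mem_closedBall_self hr0.le⟩ hfc
  have hyY : ystar ∈ Y := hball hymem
  have hnr : ‖ystar - y‖ ≤ r := by simpa [dist_eq_norm] using hymem
  have h1 : C * ‖ystar - y‖ ^ 2 ≤ |L| * Real.sqrt ‖ystar - y‖ := by
    have hfy : f ystar ≤ f y := hmin (Metric.mem_closedBall_self hr0.le)
    have hfy' : u ystar + C * ‖ystar - y‖ ^ 2 ≤ u y := by simpa [hfdef] using hfy
    have hH : |u y - u ystar| ≤ L * Real.sqrt ‖y - ystar‖ := hHol y hy ystar hyY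
    have : u y - u ystar ≤ |u y - u ystar| := le_abs_self _
    have hLabs : L * Real.sqrt ‖y - ystar‖ ≤ |L| * Real.sqrt ‖y - ystar‖ :=
      mul_le_mul_of_nonneg_right (le_abs_self L) (Real.sqrt_nonneg _)
    have hsym : ‖y - ystar‖ = ‖ystar - y‖ := norm_sub_rev _ _
    rw [hsym] at hH hLabs
    linarith
  have hlt : ‖ystar - y‖ < r := by
    rcases lt_or_eq_of_le hnr with h | h
    · exact h
    · exfalso
      rw [h] at h1
      rw [hCr] at h1
      linarith
  have hnhds : Metric.closedBall y r ∈ nhds ystar := by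
    apply Filter.mem_of_superset (Metric.isOpen_ball.mem_nhds
      (Metric.mem_ball.mpr (by simpa [dist_eq_norm] using hlt)))
    exact Metric.ball_subset_closedBall
  have hlocal : IsLocalMin (fun z => u z - φ z) ystar := by
    have heq : (fun z => u z - φ z) = f := by
      funext z; show u z - -(C * ‖z - y‖ ^ 2) = u z + C * ‖z - y‖ ^ 2; ring
    rw [heq]
    exact Filter.eventually_iff_exists_mem.mpr ⟨Metric.closedBall y r, hnhds,
      fun z hz => hmin hz⟩
  have hv := hvisc ystar hyY φ hφ.contDiffAt hlocal
  set g : EuclideanSpace ℝ (Fin n) := gradient φ ystar with hg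
  have hpsd : 0 ≤ ∑ i, ∑ j, A ystar i j * g i * g j := by
    have h2 := (Matrix.posSemidef_iff_dotProduct_mulVec.mp (hApsd ystar hyY)).2 (WithLp.ofLp g)
    have : dotProduct (star (WithLp.ofLp g)) ((A ystar).mulVec (WithLp.ofLp g)) =
        ∑ i, ∑ j, A ystar i j * g i * g j := by
      simp only [dotProduct, Matrix.mulVec, Pi.star_apply, star_trivial,
        Finset.mul_sum]
      exact Finset.sum_congr rfl fun i _ => Finset.sum_congr rfl fun j _ => by ring
    rw [this] at h2
    exact h2
  have hK2 : K ystar ≤ k₀ := by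
    simp only [ge_iff_le] at hv
    linarith
  have hdist : dist ystar y < δ := by
    have : r < δ := lt_of_le_of_lt (min_le_left _ _) (by linarith)
    calc dist ystar y = ‖ystar - y‖ := by rw [dist_eq_norm]
    _ < r := hlt
    _ < δ := this
  have hKnear : |K ystar - K y| < ε := by
    have := hδK hdist
    simpa [Real.dist_eq] using this
  have := abs_lt.mp hKnear
  linarith
end
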